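/- arXiv:2105.12616 — 2 statements merged into one kernel-verified Lean document; each statement's English description precedes it below -/
import Mathlib

section
/- Suppose n ≥ 5 and let i ≥ 0 be an integer with i < (n−5+e/2)/3. Then κ(i) < κ(i+1). -/
open Finset

/-- `t = s^(e/2)` as a real number. -/
noncomputable def tval (s e : ℕ) : ℝ := (s : ℝ) ^ ((e : ℝ) / 2)

/-- `F(i,k) = ∏_{u=n−2i+k−1}^{n−i−2} (s^u·t + 1)`. -/
noncomputable def F (n s e : ℕ) (i k : ℤ) : ℝ :=
  ∏ u ∈ Finset.Icc ((n:ℤ) - 2*i + k - 1) ((n:ℤ) - i - 2), ((s:ℝ) ^ u * tval s e + 1)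

/-- `G(i,k) = s^{(i−k)²} · ∏_{v=1}^{k+1} (s^{i−k+v}−1)/(s^v−1)
  · ∏_{v=1}^{i−k} (s^{n−2i+k−1+v}−1)/(s^v−1)`. -/
noncomputable def G (n s : ℕ) (i k : ℤ) : ℝ :=
  (s:ℝ) ^ ((i - k)^2) *
  (∏ v ∈ Finset.Icc (1:ℤ) (k + 1), ((s:ℝ) ^ (i - k + v) - 1) / ((s:ℝ) ^ v - 1)) *
  (∏ v ∈ Finset.Icc (1:ℤ) (i - k), ((s:ℝ) ^ ((n:ℤ) - 2*i + k - 1 + v) - 1) / ((s:ℝ) ^ v - 1))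

/-- `κ(i) = Σ_{k = max(2i−n+1,−1)}^{i−1} F(i,k)·G(i,k)`, the degree of `(Δ_i, ⊥)`. -/
noncomputable def kappa (n s e : ℕ) (i : ℤ) : ℝ :=
  ∑ k ∈ Finset.Icc (max (2*i - (n:ℤ) + 1) (-1)) (i - 1), F n s e i k * G n s i k

/-! ### Auxiliary material -/

/-- `gg s x = s^x - 1`. -/
noncomputable def gg (s : ℕ) (x : ℤ) : ℝ := (s:ℝ)^x - 1

/-- `ff s e u = s^u * t + 1`. -/
noncomputable def ff (s e : ℕ) (u : ℤ) : ℝ := (s:ℝ)^u * tval s e + 1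

lemma prodIoc_split (f : ℤ → ℝ) {a b c : ℤ} (h1 : a ≤ b) (h2 : b ≤ c) :
    (∏ x ∈ Ioc a b, f x) * (∏ x ∈ Ioc b c, f x) = ∏ x ∈ Ioc a c, f x := by
  rw [← Finset.prod_union (by rw [Finset.disjoint_left]; intro x hx hx'; simp at hx hx'; omega),
    Finset.Ioc_union_Ioc_eq_Ioc h1 h2]

lemma prodIoc_single (f : ℤ → ℝ) {a b : ℤ} (h : a = b - 1) :
    (∏ x ∈ Ioc a b, f x) = f b := by
  subst h
  have : Finset.Ioc (b-1) b = {b} := by ext x; simp; omega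
  rw [this, Finset.prod_singleton]

lemma prodIoc_pair (f : ℤ → ℝ) {a b : ℤ} (h : a = b - 2) :
    (∏ x ∈ Ioc a b, f x) = f (b-1) * f b := by
  subst h
  have : Finset.Ioc (b-2) b = {b-1, b} := by ext x; simp; omega
  rw [this, Finset.prod_insert (by simp), Finset.prod_singleton]

lemma prodIcc_shift (h : ℤ → ℝ) (c a b : ℤ) :
    (∏ x ∈ Icc (c+a) (c+b), h x) = ∏ v ∈ Icc a b, h (c+v) := by
  rw [← Finset.map_add_left_Icc, Finset.prod_map]; simp

lemma F_eq (n s e : ℕ) (i k : ℤ) :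
    F n s e i k = ∏ u ∈ Ioc ((n:ℤ)-2*i+k-2) ((n:ℤ)-i-2), ff s e u := by
  unfold F ff; congr 1; ext x; simp only [Finset.mem_Icc, Finset.mem_Ioc]; omega

lemma G_eq (n s : ℕ) (i k : ℤ) :
    G n s i k = (s:ℝ)^((i-k)^2)
      * ((∏ x ∈ Ioc (i-k) (i+1), gg s x) / (∏ x ∈ Ioc (0:ℤ) (k+1), gg s x))
      * ((∏ x ∈ Ioc ((n:ℤ)-2*i+k-1) ((n:ℤ)-i-1), gg s x) / (∏ x ∈ Ioc (0:ℤ) (i-k), gg s x)) := by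
  unfold G
  rw [Finset.prod_div_distrib, Finset.prod_div_distrib]
  have h1 : (∏ x ∈ Ioc (i-k) (i+1), gg s x) = ∏ v ∈ Icc (1:ℤ) (k+1), ((s:ℝ)^(i-k+v) - 1) := by
    have hset : Finset.Ioc (i-k) (i+1) = Finset.Icc ((i-k)+1) ((i-k)+(k+1)) := by
      ext x; simp; omega
    rw [hset, prodIcc_shift (gg s) (i-k) 1 (k+1)]; rfl
  have h2 : (∏ x ∈ Ioc (0:ℤ) (k+1), gg s x) = ∏ v ∈ Icc (1:ℤ) (k+1), ((s:ℝ)^v - 1) := by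
    have hset : Finset.Ioc (0:ℤ) (k+1) = Finset.Icc (1:ℤ) (k+1) := by ext x; simp; omega
    rw [hset]; rfl
  have h3 : (∏ x ∈ Ioc ((n:ℤ)-2*i+k-1) ((n:ℤ)-i-1), gg s x)
      = ∏ v ∈ Icc (1:ℤ) (i-k), ((s:ℝ)^((n:ℤ)-2*i+k-1+v) - 1) := by
    have hset : Finset.Ioc ((n:ℤ)-2*i+k-1) ((n:ℤ)-i-1)
        = Finset.Icc (((n:ℤ)-2*i+k-1)+1) (((n:ℤ)-2*i+k-1)+(i-k)) := by
      ext x; simp; omega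
    rw [hset, prodIcc_shift (gg s) ((n:ℤ)-2*i+k-1) 1 (i-k)]; rfl
  have h4 : (∏ x ∈ Ioc (0:ℤ) (i-k), gg s x) = ∏ v ∈ Icc (1:ℤ) (i-k), ((s:ℝ)^v - 1) := by
    have hset : Finset.Ioc (0:ℤ) (i-k) = Finset.Icc (1:ℤ) (i-k) := by ext x; simp; omega
    rw [hset]; rfl
  rw [h1, h2, h3, h4]


lemma gg_pos {s : ℕ} (hs : 2 ≤ s) {x : ℤ} (hx : 1 ≤ x) : 0 < gg s x := by
  have s2 : (2:ℝ) ≤ (s:ℝ) := by exact_mod_cast hs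
  have h1 : (s:ℝ)^(1:ℤ) ≤ (s:ℝ)^x := zpow_le_zpow_right₀ (by linarith) hx
  rw [zpow_one] at h1
  unfold gg; linarith

lemma gg_mono {s : ℕ} (hs : 2 ≤ s) {x y : ℤ} (h : x ≤ y) : gg s x ≤ gg s y := by
  have s2 : (2:ℝ) ≤ (s:ℝ) := by exact_mod_cast hs
  have := zpow_le_zpow_right₀ (show (1:ℝ) ≤ (s:ℝ) by linarith) h
  unfold gg; linarith

lemma ff_pos (s e : ℕ) (u : ℤ) : 0 < ff s e u := by
  unfold ff tval
  positivity

lemma prodff_pos (s e : ℕ) (a c : ℤ) : 0 < ∏ x ∈ Ioc a c, ff s e x :=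
  Finset.prod_pos (fun x _ => ff_pos s e x)

lemma prodgg_pos {s : ℕ} (hs : 2 ≤ s) {a : ℤ} (c : ℤ) (ha : 0 ≤ a) :
    0 < ∏ x ∈ Ioc a c, gg s x :=
  Finset.prod_pos (fun x hx => gg_pos hs (by simp [Finset.mem_Ioc] at hx; omega))

lemma term_le (n s e : ℕ) (hs : 2 ≤ s) (i k : ℤ)
    (hi : 0 ≤ i) (hk1 : -1 ≤ k) (hk2 : k ≤ i - 1) (hn4 : 3*i + 4 ≤ (n:ℤ))
    (hexp : 0 ≤ (n:ℝ) - 3*(i:ℝ) + 2*(k:ℝ) - 3 + (e:ℝ)/2) :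
    F n s e i k * G n s i k ≤ F n s e (i+1) k * G n s (i+1) k := by
  have s2 : (2:ℝ) ≤ (s:ℝ) := by exact_mod_cast hs
  have s0 : (0:ℝ) < (s:ℝ) := by linarith
  have s1 : (1:ℝ) < (s:ℝ) := by linarith
  set L : ℤ := (n:ℤ) - 2*i + k - 2 with hL
  set U : ℤ := (n:ℤ) - i - 2 with hU
  rw [F_eq, F_eq, G_eq, G_eq]
  have eb1 : (n:ℤ) - 2*(i+1) + k - 2 = L - 2 := by omega
  have eb2 : (n:ℤ) - (i+1) - 2 = U - 1 := by omega
  have eb4 : (i:ℤ) + 1 + 1 = i + 2 := by ring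
  have eb5 : (n:ℤ) - 2*(i+1) + k - 1 = L - 1 := by omega
  have eb6 : (n:ℤ) - (i+1) - 1 = U := by omega
  have eb7 : (n:ℤ) - 2*i + k - 1 = L + 1 := by omega
  have eb8 : (n:ℤ) - i - 1 = U + 1 := by omega
  rw [eb1, eb2, eb4, eb5, eb6, eb7, eb8]
  -- splitting identities
  have hFi : (∏ x ∈ Ioc L U, ff s e x) = (∏ x ∈ Ioc L (U-1), ff s e x) * ff s e U := by
    rw [← prodIoc_split (ff s e) (show L ≤ U - 1 by omega) (show U - 1 ≤ U by omega),
      prodIoc_single (ff s e) (rfl : U - 1 = U - 1)]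
  have hFi' : (∏ x ∈ Ioc (L-2) (U-1), ff s e x) = (ff s e (L-1) * ff s e L) * (∏ x ∈ Ioc L (U-1), ff s e x) := by
    rw [← prodIoc_split (ff s e) (show L-2 ≤ L by omega) (show L ≤ U-1 by omega),
      prodIoc_pair (ff s e) (rfl : L - 2 = L - 2)]
  have hN2 : (∏ x ∈ Ioc (L+1) (U+1), gg s x) = (∏ x ∈ Ioc (L+1) U, gg s x) * gg s (U+1) := by
    rw [← prodIoc_split (gg s) (show L+1 ≤ U by omega) (show U ≤ U+1 by omega),
      prodIoc_single (gg s) (show U = (U+1) - 1 by omega)]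
  have hN2' : (∏ x ∈ Ioc (L-1) U, gg s x) = (gg s L * gg s (L+1)) * (∏ x ∈ Ioc (L+1) U, gg s x) := by
    rw [← prodIoc_split (gg s) (show L-1 ≤ L+1 by omega) (show L+1 ≤ U by omega),
      prodIoc_pair (gg s) (show L-1 = (L+1) - 2 by omega)]
    have h9 : (L:ℤ) + 1 - 1 = L := by omega
    rw [h9]
  have hD2e : (∏ x ∈ Ioc (0:ℤ) (i+1-k), gg s x) = (∏ x ∈ Ioc (0:ℤ) (i-k), gg s x) * gg s (i+1-k) := by
    rw [← prodIoc_split (gg s) (show (0:ℤ) ≤ i-k by omega) (show i-k ≤ i+1-k by omega),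
      prodIoc_single (gg s) (show i-k = (i+1-k) - 1 by omega)]
  have hN1e : (∏ x ∈ Ioc (i-k) (i+1), gg s x) * gg s (i+2) = gg s (i+1-k) * (∏ x ∈ Ioc (i+1-k) (i+2), gg s x) := by
    unfold gg
    rw [← prodIoc_single (fun x => (s:ℝ)^x - 1) (show (i:ℤ)+1 = (i+2) - 1 by omega),
      ← prodIoc_single (fun x => (s:ℝ)^x - 1) (show (i:ℤ)-k = (i+1-k) - 1 by omega),
      prodIoc_split (fun x => (s:ℝ)^x - 1) (show i-k ≤ i+1 by omega) (show (i:ℤ)+1 ≤ i+2 by omega),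
      prodIoc_split (fun x => (s:ℝ)^x - 1) (show i-k ≤ i+1-k by omega) (show i+1-k ≤ i+2 by omega)]
  have hS : (s:ℝ)^((i+1-k)^2) = (s:ℝ)^((i-k)^2) * (s:ℝ)^(2*(i-k)+1) := by
    rw [← zpow_add₀ (ne_of_gt s0)]
    congr 1; ring
  rw [hFi, hFi', hN2, hN2', hD2e, hS]
  -- basic positivity
  have hPf : 0 < (∏ x ∈ Ioc L (U-1), ff s e x) := prodff_pos s e _ _
  have hMp : 0 < (∏ x ∈ Ioc (L+1) U, gg s x) := prodgg_pos hs _ (by omega)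
  have hN1pos : 0 < (∏ x ∈ Ioc (i-k) (i+1), gg s x) := prodgg_pos hs _ (by omega)
  have hN1ppos : 0 < (∏ x ∈ Ioc (i+1-k) (i+2), gg s x) := prodgg_pos hs _ (by omega)
  have hD1p : 0 < (∏ x ∈ Ioc (0:ℤ) (k+1), gg s x) := prodgg_pos hs _ le_rfl
  have hD2p : 0 < (∏ x ∈ Ioc (0:ℤ) (i-k), gg s x) := prodgg_pos hs _ le_rfl
  have hgb : 0 < gg s (i+1-k) := gg_pos hs (by omega)
  have hgi2 : 0 < gg s (i+2) := gg_pos hs (by omega)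
  have hW : (0:ℝ) < (((∏ x ∈ Ioc (0:ℤ) (k+1), gg s x) * (∏ x ∈ Ioc (0:ℤ) (i-k), gg s x)) * ((∏ x ∈ Ioc (0:ℤ) (k+1), gg s x) * ((∏ x ∈ Ioc (0:ℤ) (i-k), gg s x) * gg s (i+1-k)))) := by
    apply mul_pos (mul_pos hD1p hD2p) (mul_pos hD1p (mul_pos hD2p hgb))
  -- the three core factor inequalities
  have c1 : ff s e U ≤ ff s e (L-1) * ff s e L := by
    have key : (s:ℝ)^U * tval s e ≤ ((s:ℝ)^(L-1) * tval s e) * ((s:ℝ)^L * tval s e) := by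
      have ht : tval s e = (s:ℝ) ^ ((e:ℝ)/2) := rfl
      have hc : ∀ m : ℤ, (s:ℝ)^m = (s:ℝ) ^ ((m:ℝ)) := fun m => (Real.rpow_intCast _ m).symm
      rw [ht, hc U, hc (L-1), hc L]
      rw [← Real.rpow_add s0, ← Real.rpow_add s0, ← Real.rpow_add s0, ← Real.rpow_add s0]
      apply (Real.rpow_le_rpow_left_iff s1).mpr
      have hLr : ((L:ℤ):ℝ) = (n:ℝ) - 2*(i:ℝ) + (k:ℝ) - 2 := by rw [hL]; push_cast; ring
      have hUr : ((U:ℤ):ℝ) = (n:ℝ) - (i:ℝ) - 2 := by rw [hU]; push_cast; ring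
      push_cast
      rw [hLr, hUr]
      linarith
    have p1 : (0:ℝ) ≤ (s:ℝ)^(L-1) * tval s e := by
      have := Real.rpow_pos_of_pos s0 ((e:ℝ)/2)
      have h2 := zpow_pos s0 (L-1)
      unfold tval; positivity
    have p2 : (0:ℝ) ≤ (s:ℝ)^L * tval s e := by unfold tval; positivity
    unfold ff
    nlinarith [key, p1, p2]
  have c2 : gg s (U+1) ≤ (s:ℝ)^(2*(i-k)+1) * gg s L := by
    unfold gg
    have h1 : (s:ℝ)^(2*(i-k)+1) * (s:ℝ)^L = (s:ℝ)^(U+1) * (s:ℝ)^(i-k) := by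
      rw [← zpow_add₀ (ne_of_gt s0), ← zpow_add₀ (ne_of_gt s0)]
      congr 1; omega
    have h2 : (2:ℝ) ≤ (s:ℝ)^(i-k) := by
      have := zpow_le_zpow_right₀ (show (1:ℝ) ≤ (s:ℝ) by linarith) (show (1:ℤ) ≤ i-k by omega)
      rw [zpow_one] at this; linarith
    have h3 : (s:ℝ)^(2*(i-k)+1) ≤ (s:ℝ)^(U+1) :=
      zpow_le_zpow_right₀ (show (1:ℝ) ≤ (s:ℝ) by linarith) (by omega)
    have h4 : (0:ℝ) < (s:ℝ)^(U+1) := zpow_pos s0 _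
    have h5 : (s:ℝ)^(U+1) * 2 ≤ (s:ℝ)^(U+1) * (s:ℝ)^(i-k) :=
      mul_le_mul_of_nonneg_left h2 h4.le
    rw [mul_sub, mul_one, h1]
    linarith
  have c3 : gg s (i+1-k) ≤ gg s (L+1) := gg_mono hs (by omega)
  have c4 : gg s (i+1-k) ≤ gg s (i+2) := gg_mono hs (by omega)
  have hLpos : (1:ℤ) ≤ L := by omega
  have core : ff s e U * gg s (U+1) * (gg s (i+1-k) * gg s (i+1-k))
      ≤ (ff s e (L-1) * ff s e L) * ((s:ℝ)^(2*(i-k)+1) * gg s L) * (gg s (L+1) * gg s (i+2)) := by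
    have m1 : ff s e U * gg s (U+1) ≤ (ff s e (L-1) * ff s e L) * ((s:ℝ)^(2*(i-k)+1) * gg s L) :=
      mul_le_mul c1 c2 (gg_pos hs (show (1:ℤ) ≤ U+1 by omega)).le
        (mul_pos (ff_pos s e _) (ff_pos s e _)).le
    have m2 : gg s (i+1-k) * gg s (i+1-k) ≤ gg s (L+1) * gg s (i+2) :=
      mul_le_mul c3 c4 hgb.le (gg_pos hs (by omega)).le
    exact mul_le_mul m1 m2 (mul_pos hgb hgb).le
      (mul_pos (mul_pos (ff_pos s e _) (ff_pos s e _))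
        (mul_pos (zpow_pos s0 _) (gg_pos hs hLpos))).le
  -- reduce to a division-free inequality
  apply (mul_le_mul_iff_of_pos_right hW).mp
  have hL1 : (((∏ x ∈ Ioc L (U-1), ff s e x) * ff s e U) * ((s:ℝ)^((i-k)^2) * ((∏ x ∈ Ioc (i-k) (i+1), gg s x) / (∏ x ∈ Ioc (0:ℤ) (k+1), gg s x)) * (((∏ x ∈ Ioc (L+1) U, gg s x) * gg s (U+1)) / (∏ x ∈ Ioc (0:ℤ) (i-k), gg s x)))) * (((∏ x ∈ Ioc (0:ℤ) (k+1), gg s x) * (∏ x ∈ Ioc (0:ℤ) (i-k), gg s x)) * ((∏ x ∈ Ioc (0:ℤ) (k+1), gg s x) * ((∏ x ∈ Ioc (0:ℤ) (i-k), gg s x) * gg s (i+1-k)))) = (((∏ x ∈ Ioc L (U-1), ff s e x) * ff s e U * (s:ℝ)^((i-k)^2) * (∏ x ∈ Ioc (i-k) (i+1), gg s x) * (∏ x ∈ Ioc (L+1) U, gg s x) * gg s (U+1)) * ((∏ x ∈ Ioc (0:ℤ) (k+1), gg s x) * ((∏ x ∈ Ioc (0:ℤ) (i-k), gg s x) * gg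 s (i+1-k)))) := by
    field_simp
  have hR1 : (((ff s e (L-1) * ff s e L) * (∏ x ∈ Ioc L (U-1), ff s e x)) * (((s:ℝ)^((i-k)^2) * (s:ℝ)^(2*(i-k)+1)) * ((∏ x ∈ Ioc (i+1-k) (i+2), gg s x) / (∏ x ∈ Ioc (0:ℤ) (k+1), gg s x)) * (((gg s L * gg s (L+1)) * (∏ x ∈ Ioc (L+1) U, gg s x)) / ((∏ x ∈ Ioc (0:ℤ) (i-k), gg s x) * gg s (i+1-k))))) * (((∏ x ∈ Ioc (0:ℤ) (k+1), gg s x) * (∏ x ∈ Ioc (0:ℤ) (i-k), gg s x)) * ((∏ x ∈ Ioc (0:ℤ) (k+1), gg s x) * ((∏ x ∈ Ioc (0:ℤ) (i-k), gg s x) * gg s (i+1-k)))) = (((ff s e (L-1) * ff s e L) * (∏ x ∈ Ioc L (U-1), ff s e x) * (s:ℝ)^((i-k)^2) * (s:ℝ)^(2*(i-k)+1) * (∏ x ∈ Ioc (i+1-k) (i+2), gg s x) * gg s L * gg s (L+1) * (∏ x ∈ Ioc (L+1) U, gg s x)) * ((∏ x ∈ Ioc (0:ℤ) (k+1), gg s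 x) * (∏ x ∈ Ioc (0:ℤ) (i-k), gg s x))) := by
    field_simp
  rw [hL1, hR1]
  apply (mul_le_mul_iff_of_pos_right hgi2).mp
  have hC1 : (0:ℝ) < ((∏ x ∈ Ioc L (U-1), ff s e x) * (s:ℝ)^((i-k)^2) * (∏ x ∈ Ioc (L+1) U, gg s x) * (∏ x ∈ Ioc (i+1-k) (i+2), gg s x) * ((∏ x ∈ Ioc (0:ℤ) (k+1), gg s x) * (∏ x ∈ Ioc (0:ℤ) (i-k), gg s x))) :=
    mul_pos (mul_pos (mul_pos (mul_pos hPf (zpow_pos s0 _)) hMp) hN1ppos) (mul_pos hD1p hD2p)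
  calc (((∏ x ∈ Ioc L (U-1), ff s e x) * ff s e U * (s:ℝ)^((i-k)^2) * (∏ x ∈ Ioc (i-k) (i+1), gg s x) * (∏ x ∈ Ioc (L+1) U, gg s x) * gg s (U+1)) * ((∏ x ∈ Ioc (0:ℤ) (k+1), gg s x) * ((∏ x ∈ Ioc (0:ℤ) (i-k), gg s x) * gg s (i+1-k)))) * gg s (i+2)
      = ((∏ x ∈ Ioc L (U-1), ff s e x) * ff s e U * (s:ℝ)^((i-k)^2) * (∏ x ∈ Ioc (L+1) U, gg s x) * gg s (U+1) * ((∏ x ∈ Ioc (0:ℤ) (k+1), gg s x) * ((∏ x ∈ Ioc (0:ℤ) (i-k), gg s x) * gg s (i+1-k)))) * ((∏ x ∈ Ioc (i-k) (i+1), gg s x) * gg s (i+2)) := by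
        ring
    _ = ((∏ x ∈ Ioc L (U-1), ff s e x) * ff s e U * (s:ℝ)^((i-k)^2) * (∏ x ∈ Ioc (L+1) U, gg s x) * gg s (U+1) * ((∏ x ∈ Ioc (0:ℤ) (k+1), gg s x) * ((∏ x ∈ Ioc (0:ℤ) (i-k), gg s x) * gg s (i+1-k)))) * (gg s (i+1-k) * (∏ x ∈ Ioc (i+1-k) (i+2), gg s x)) := by
        rw [hN1e]
    _ = ((∏ x ∈ Ioc L (U-1), ff s e x) * (s:ℝ)^((i-k)^2) * (∏ x ∈ Ioc (L+1) U, gg s x) * (∏ x ∈ Ioc (i+1-k) (i+2), gg s x) * ((∏ x ∈ Ioc (0:ℤ) (k+1), gg s x) * (∏ x ∈ Ioc (0:ℤ) (i-k), gg s x))) * (ff s e U * gg s (U+1) * (gg s (i+1-k) * gg s (i+1-k))) := by ring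
    _ ≤ ((∏ x ∈ Ioc L (U-1), ff s e x) * (s:ℝ)^((i-k)^2) * (∏ x ∈ Ioc (L+1) U, gg s x) * (∏ x ∈ Ioc (i+1-k) (i+2), gg s x) * ((∏ x ∈ Ioc (0:ℤ) (k+1), gg s x) * (∏ x ∈ Ioc (0:ℤ) (i-k), gg s x))) * ((ff s e (L-1) * ff s e L) * ((s:ℝ)^(2*(i-k)+1) * gg s L) * (gg s (L+1) * gg s (i+2))) :=
        mul_le_mul_of_nonneg_left core hC1.le
    _ = (((ff s e (L-1) * ff s e L) * (∏ x ∈ Ioc L (U-1), ff s e x) * (s:ℝ)^((i-k)^2) * (s:ℝ)^(2*(i-k)+1) * (∏ x ∈ Ioc (i+1-k) (i+2), gg s x) * gg s L * gg s (L+1) * (∏ x ∈ Ioc (L+1) U, gg s x)) * ((∏ x ∈ Ioc (0:ℤ) (k+1), gg s x) * (∏ x ∈ Ioc (0:ℤ) (i-k), gg s x))) * gg s (i+2) := by ring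

lemma term_pos (n s e : ℕ) (hs : 2 ≤ s) (i : ℤ) (hi : 0 ≤ i) (hn4 : 3*i + 4 ≤ (n:ℤ)) :
    0 < F n s e (i+1) i * G n s (i+1) i := by
  rw [F_eq, G_eq]
  have s2 : (2:ℝ) ≤ (s:ℝ) := by exact_mod_cast hs
  have s0 : (0:ℝ) < (s:ℝ) := by linarith
  apply mul_pos (prodff_pos s e _ _)
  apply mul_pos (mul_pos (zpow_pos s0 _) _) _
  · exact div_pos (prodgg_pos hs _ (by omega)) (prodgg_pos hs _ le_rfl)
  · exact div_pos (prodgg_pos hs _ (by omega)) (prodgg_pos hs _ le_rfl)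

theorem stmt_12 (n s e : ℕ) (hn : 5 ≤ n) (hs : 2 ≤ s) (he : e ≤ 4)
    (i : ℤ) (hi : 0 ≤ i) (hi' : (i:ℝ) < ((n:ℝ) - 5 + (e:ℝ)/2) / 3) :
    kappa n s e i < kappa n s e (i + 1) := by
  have heR : (e:ℝ) ≤ 4 := by exact_mod_cast he
  have h3i : 3*(i:ℝ) < (n:ℝ) - 5 + (e:ℝ)/2 := by linarith
  have hn4 : 3*i + 4 ≤ (n:ℤ) := by
    have h1 : ((3*i : ℤ):ℝ) < (((n:ℤ) - 3 : ℤ):ℝ) := by push_cast; linarith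
    have h2 : (3*i : ℤ) < (n:ℤ) - 3 := by exact_mod_cast h1
    omega
  unfold kappa
  have hm1 : max (2*i - (n:ℤ) + 1) (-1 : ℤ) = -1 := by omega
  have hm2 : max (2*(i+1) - (n:ℤ) + 1) (-1 : ℤ) = -1 := by omega
  have hm3 : (i:ℤ) + 1 - 1 = i := by ring
  rw [hm1, hm2, hm3]
  have hsplit : (Finset.Icc (-1:ℤ) i) = insert i (Finset.Icc (-1:ℤ) (i-1)) := by
    ext x; simp; omega
  rw [hsplit, Finset.sum_insert (by simp)]
  have hle : ∑ k ∈ Finset.Icc (-1:ℤ) (i-1), F n s e i k * G n s i k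
      ≤ ∑ k ∈ Finset.Icc (-1:ℤ) (i-1), F n s e (i+1) k * G n s (i+1) k := by
    apply Finset.sum_le_sum
    intro k hk
    simp only [Finset.mem_Icc] at hk
    apply term_le n s e hs i k hi hk.1 hk.2 hn4
    have hkR : (-1:ℝ) ≤ (k:ℝ) := by exact_mod_cast hk.1
    linarith
  have hpos := term_pos n s e hs i hi hn4
  linarith
end

section
/- Suppose n ≥ 5 − e/2 and let i, j be integers with 0 ≤ i < j ≤ ⌈(n−5+e/2)/3⌉. Then κ(i) < κ(j). -/
open Finset

/-! ### Auxiliary lemmas on intervals and products -/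

lemma my_prod_insert_left (f : ℤ → ℝ) {a b : ℤ} (h : a ≤ b) :
    ∏ u ∈ Finset.Icc a b, f u = f a * ∏ u ∈ Finset.Icc (a+1) b, f u := by
  have hIcc : Finset.Icc a b = insert a (Finset.Icc (a+1) b) := by
    ext x; simp only [Finset.mem_Icc, Finset.mem_insert]; omega
  rw [hIcc, Finset.prod_insert (by simp only [Finset.mem_Icc]; omega)]

lemma my_prod_insert_right (f : ℤ → ℝ) {a b : ℤ} (h : a ≤ b) :
    ∏ u ∈ Finset.Icc a b, f u = (∏ u ∈ Finset.Icc a (b-1), f u) * f b := by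
  have hIcc : Finset.Icc a b = insert b (Finset.Icc a (b-1)) := by
    ext x; simp only [Finset.mem_Icc, Finset.mem_insert]; omega
  rw [hIcc, Finset.prod_insert (by simp only [Finset.mem_Icc]; omega), mul_comm]

lemma my_prod_shift (f : ℤ → ℝ) (a b c : ℤ) :
    ∏ u ∈ Finset.Icc (a+c) (b+c), f u = ∏ u ∈ Finset.Icc a b, f (u + c) := by
  rw [← Finset.map_add_right_Icc, Finset.prod_map]
  rfl

lemma my_prod_shift' (f : ℤ → ℝ) {a b a' b' : ℤ} (c : ℤ) (ha : a' = a + c) (hb : b' = b + c) :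
    ∏ u ∈ Finset.Icc a' b', f u = ∏ u ∈ Finset.Icc a b, f (u + c) := by
  subst ha; subst hb; exact my_prod_shift f a b c

/-! ### Basic facts about powers of `S ≥ 2` -/

section Sbase

variable {S : ℝ} (hS : 2 ≤ S)
include hS

lemma myS1 : (1:ℝ) ≤ S := by linarith
lemma myS0 : (0:ℝ) < S := by linarith
lemma mySne : S ≠ 0 := ne_of_gt (myS0 hS)

lemma my_zpow_pos (a : ℤ) : 0 < S ^ a := zpow_pos (myS0 hS) a

lemma my_zpow_mono {a b : ℤ} (hab : a ≤ b) : S ^ a ≤ S ^ b :=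
  zpow_le_zpow_right₀ (myS1 hS) hab

lemma my_one_le_zpow {a : ℤ} (ha : 0 ≤ a) : 1 ≤ S ^ a := by
  calc (1:ℝ) = S ^ (0:ℤ) := (zpow_zero S).symm
  _ ≤ S ^ a := my_zpow_mono hS ha

lemma zpow_sub_one_pos {v : ℤ} (hv : 1 ≤ v) : 0 < S ^ v - 1 := by
  have h := my_zpow_mono hS hv
  simp only [zpow_one] at h
  linarith

lemma zpow_sub_one_nonneg {v : ℤ} (hv : 0 ≤ v) : 0 ≤ S ^ v - 1 := by
  have := my_one_le_zpow hS hv; linarith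

lemma my_zpow_mul {a b : ℤ} : S ^ a * S ^ b = S ^ (a + b) :=
  (zpow_add₀ (mySne hS) a b).symm

end Sbase

lemma tval_one_le {s e : ℕ} (hs : 2 ≤ s) : 1 ≤ tval s e := by
  have h1 : (1:ℝ) ≤ (s:ℝ) := by
    have : (2:ℝ) ≤ (s:ℝ) := by exact_mod_cast hs
    linarith
  exact Real.one_le_rpow h1 (by positivity)

lemma tval_pos {s e : ℕ} (hs : 2 ≤ s) : 0 < tval s e :=
  lt_of_lt_of_le one_pos (tval_one_le hs)

/-- `t * S^E ≥ 1` when `2E + e ≥ 0`. -/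
lemma tval_mul_zpow_ge_one {s e : ℕ} (hs : 2 ≤ s) {E : ℤ} (hE : 0 ≤ 2*E + (e:ℤ)) :
    1 ≤ tval s e * (s:ℝ) ^ E := by
  have hs1 : (1:ℝ) ≤ (s:ℝ) := by
    have : (2:ℝ) ≤ (s:ℝ) := by exact_mod_cast hs
    linarith
  have hs0 : (0:ℝ) < (s:ℝ) := by linarith
  have hz : (s:ℝ) ^ E = (s:ℝ) ^ ((E:ℤ) : ℝ) := (Real.rpow_intCast _ _).symm
  rw [tval, hz, ← Real.rpow_add hs0]
  apply Real.one_le_rpow hs1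
  have h2 : (0:ℝ) ≤ 2*(E:ℝ) + (e:ℝ) := by exact_mod_cast hE
  linarith

/-! ### Positivity of the summands -/

lemma F_pos {n s e : ℕ} (hs : 2 ≤ s) (i k : ℤ) : 0 < F n s e i k := by
  have hS : (2:ℝ) ≤ (s:ℝ) := by exact_mod_cast hs
  apply Finset.prod_pos
  intro u _
  have h1 : 0 < (s:ℝ) ^ u := my_zpow_pos hS u
  have h2 := tval_pos (e := e) hs
  nlinarith

lemma G_pos {n s : ℕ} (hs : 2 ≤ s) {i k : ℤ} (hk : k ≤ i - 1)
    (hm : 0 ≤ (n:ℤ) - 2*i + k - 1) : 0 < G n s i k := by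
  have hS : (2:ℝ) ≤ (s:ℝ) := by exact_mod_cast hs
  unfold G
  apply mul_pos (mul_pos (my_zpow_pos hS _) _)
  · apply Finset.prod_pos
    intro v hv
    simp only [Finset.mem_Icc] at hv
    exact div_pos (zpow_sub_one_pos hS (by omega)) (zpow_sub_one_pos hS (by omega))
  · apply Finset.prod_pos
    intro v hv
    simp only [Finset.mem_Icc] at hv
    exact div_pos (zpow_sub_one_pos hS (by omega)) (zpow_sub_one_pos hS (by omega))

/-! ### The `F`-step inequality -/

lemma F_step {S t : ℝ} (hS : 2 ≤ S) (ht : 1 ≤ t) {m r : ℤ} (hm : 2 ≤ m) (hr : 1 ≤ r) :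
    (S^(m-2) * t * S^(-r)) * (∏ u ∈ Finset.Icc m (m+r-1), (S^u * t + 1))
      < ∏ u ∈ Finset.Icc (m-2) (m+r-2), (S^u * t + 1) := by
  have hS0 := myS0 hS
  have hSne := mySne hS
  have ht0 : (0:ℝ) < t := by linarith
  have hfpos : ∀ u : ℤ, (0:ℝ) < S^u * t + 1 := by
    intro u
    have := my_zpow_pos hS u
    nlinarith
  have hprodpos : (0:ℝ) < ∏ u ∈ Finset.Icc m (m+r-1), (S^u * t + 1) :=
    Finset.prod_pos (fun u _ => hfpos u)
  rw [my_prod_insert_left _ (by omega : m - 2 ≤ m + r - 2),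
      show m - 2 + 1 = m - 1 by ring]
  have hshift : ∏ u ∈ Finset.Icc m (m+r-1), (S^u * t + 1)
      = ∏ u ∈ Finset.Icc (m-1) (m+r-2), (S^(u+1) * t + 1) :=
    my_prod_shift' (fun u => S^u*t+1) 1 (by ring) (by ring)
  have hcard : (Finset.Icc (m-1) (m+r-2)).card = r.toNat := by
    rw [Int.card_Icc]; congr 1; omega
  have hQ : S ^ (-r) * ∏ u ∈ Finset.Icc m (m+r-1), (S^u * t + 1)
      ≤ ∏ u ∈ Finset.Icc (m-1) (m+r-2), (S^u * t + 1) := by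
    rw [hshift]
    have hSr : S ^ (-r) = ∏ _u ∈ Finset.Icc (m-1) (m+r-2), S⁻¹ := by
      rw [Finset.prod_const, hcard, ← zpow_natCast S⁻¹, inv_zpow, ← zpow_neg]
      congr 1
      omega
    rw [hSr, ← Finset.prod_mul_distrib]
    apply Finset.prod_le_prod
    · intro u _
      have h1 := hfpos (u+1)
      have h2 : (0:ℝ) < S⁻¹ := by positivity
      positivity
    · intro u _
      have h1 : S ^ (u+1) = S ^ u * S := zpow_add_one₀ hSne u
      have h2 : (0:ℝ) < S ^ u := my_zpow_pos hS u
      have h3 : S⁻¹ * S = 1 := inv_mul_cancel₀ hSne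
      have h4 : S⁻¹ ≤ 1 := by nlinarith [inv_pos.mpr hS0]
      have h5 : S⁻¹ * (S^u * S * t + 1) = (S⁻¹ * S) * (S^u * t) + S⁻¹ := by ring
      rw [h1, h5, h3, one_mul]
      linarith
  have hbot : S^(m-2) * t < S^(m-2) * t + 1 := by linarith
  have hposc : 0 < S ^ (-r) * ∏ u ∈ Finset.Icc m (m+r-1), (S^u * t + 1) :=
    mul_pos (my_zpow_pos hS _) hprodpos
  calc (S^(m-2) * t * S^(-r)) * (∏ u ∈ Finset.Icc m (m+r-1), (S^u * t + 1))
      = (S^(m-2) * t) * (S^(-r) * ∏ u ∈ Finset.Icc m (m+r-1), (S^u * t + 1)) := by ring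
    _ < (S^(m-2) * t + 1) * (∏ u ∈ Finset.Icc (m-1) (m+r-2), (S^u * t + 1)) :=
        mul_lt_mul hbot hQ hposc (le_of_lt (hfpos (m-2)))

/-! ### The `G`-step inequality -/

lemma G_step {S : ℝ} (hS : 2 ≤ S) {m r k : ℤ} (hm : 2 ≤ m) (hr : 1 ≤ r)
    (hk : -1 ≤ k) (hmr : r + 1 ≤ m) :
    (S^(2*r+1) * (S^(k+1) * ((S-1) * S^(m-2*r-3)))) *
      (S^(r^2) *
       (∏ v ∈ Finset.Icc (1:ℤ) (k+1), (S^(r+v)-1)/(S^v-1)) *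
       (∏ v ∈ Finset.Icc (1:ℤ) r, (S^(m+v)-1)/(S^v-1)))
    ≤ S^((r+1)^2) *
       (∏ v ∈ Finset.Icc (1:ℤ) (k+1), (S^(r+1+v)-1)/(S^v-1)) *
       (∏ v ∈ Finset.Icc (1:ℤ) (r+1), (S^(m-2+v)-1)/(S^v-1)) := by
  have hS0 := myS0 hS
  have hSne := mySne hS
  have hS1 := myS1 hS
  -- abbreviations
  set P2 : ℝ := ∏ v ∈ Finset.Icc (1:ℤ) (k+1), (S^(r+v)-1)/(S^v-1) with hP2def
  set P2' : ℝ := ∏ v ∈ Finset.Icc (1:ℤ) (k+1), (S^(r+1+v)-1)/(S^v-1) with hP2'def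
  set P3 : ℝ := ∏ v ∈ Finset.Icc (1:ℤ) r, (S^(m+v)-1)/(S^v-1) with hP3def
  set P3' : ℝ := ∏ v ∈ Finset.Icc (1:ℤ) (r+1), (S^(m-2+v)-1)/(S^v-1) with hP3'def
  clear_value P2 P2' P3 P3'
  -- nonnegativity
  have hP2nonneg : 0 ≤ P2 := hP2def ▸ Finset.prod_nonneg (by
    intro v hv; simp only [Finset.mem_Icc] at hv
    exact div_nonneg (zpow_sub_one_nonneg hS (by omega)) (zpow_sub_one_nonneg hS (by omega)))
  have hP2'nonneg : 0 ≤ P2' := hP2'def ▸ Finset.prod_nonneg (by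
    intro v hv; simp only [Finset.mem_Icc] at hv
    exact div_nonneg (zpow_sub_one_nonneg hS (by omega)) (zpow_sub_one_nonneg hS (by omega)))
  have hP3nonneg : 0 ≤ P3 := hP3def ▸ Finset.prod_nonneg (by
    intro v hv; simp only [Finset.mem_Icc] at hv
    exact div_nonneg (zpow_sub_one_nonneg hS (by omega)) (zpow_sub_one_nonneg hS (by omega)))
  -- the P2 comparison
  have hP2bound : S^(k+1) * P2 ≤ P2' := by
    set D : ℝ := ∏ v ∈ Finset.Icc (1:ℤ) (k+1), (S^v - 1) with hDdef
    set N : ℝ := ∏ v ∈ Finset.Icc (1:ℤ) (k+1), (S^(r+v) - 1) with hNdef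
    set N' : ℝ := ∏ v ∈ Finset.Icc (1:ℤ) (k+1), (S^(r+1+v) - 1) with hN'def
    clear_value D N N'
    have hDpos : 0 < D := hDdef ▸ Finset.prod_pos (by
      intro v hv; simp only [Finset.mem_Icc] at hv
      exact zpow_sub_one_pos hS (by omega))
    have hNnonneg : 0 ≤ N := hNdef ▸ Finset.prod_nonneg (by
      intro v hv; simp only [Finset.mem_Icc] at hv
      exact zpow_sub_one_nonneg hS (by omega))
    have e1 : P2 = N / D := by rw [hP2def, hNdef, hDdef, ← Finset.prod_div_distrib]
    have e1' : P2' = N' / D := by rw [hP2'def, hN'def, hDdef, ← Finset.prod_div_distrib]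
    -- telescoping identity
    have htel : N' * (S^(r+1)-1) = N * (S^(r+(k+2))-1) := by
      have hN'2 : N' = ∏ v ∈ Finset.Icc (1:ℤ) (k+1), (S^(r+(v+1))-1) := by
        rw [hN'def]
        exact Finset.prod_congr rfl (fun v _ => by rw [show r+1+v = r+(v+1) by ring])
      have hful1 : ∏ v ∈ Finset.Icc (1:ℤ) (k+2), (S^(r+v)-1)
          = (S^(r+1)-1) * ∏ v ∈ Finset.Icc (2:ℤ) (k+2), (S^(r+v)-1) := by
        have := my_prod_insert_left (fun v => S^(r+v)-1) (by omega : (1:ℤ) ≤ k+2)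
        simpa using this
      have hshift2 : ∏ v ∈ Finset.Icc (2:ℤ) (k+2), (S^(r+v)-1)
          = ∏ v ∈ Finset.Icc (1:ℤ) (k+1), (S^(r+(v+1))-1) :=
        my_prod_shift' (fun v => S^(r+v)-1) 1 (by ring) (by ring)
      have hful2 : ∏ v ∈ Finset.Icc (1:ℤ) (k+2), (S^(r+v)-1)
          = (∏ v ∈ Finset.Icc (1:ℤ) (k+1), (S^(r+v)-1)) * (S^(r+(k+2))-1) := by
        have h := my_prod_insert_right (fun v => S^(r+v)-1) (by omega : (1:ℤ) ≤ k+2)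
        rw [show k+2-1 = k+1 by ring] at h
        simpa using h
      rw [hN'2, ← hshift2]
      rw [← hNdef] at hful2
      rw [mul_comm, ← hful1, hful2]
    have h1 : (0:ℝ) < S^(r+1) - 1 := zpow_sub_one_pos hS (by omega)
    have hnum : S^(k+1) * N ≤ N' := by
      have h2 : S^(k+1) * (S^(r+1) - 1) ≤ S^(r+(k+2)) - 1 := by
        have hmul : S^(k+1) * S^(r+1) = S^(r+(k+2)) := by
          rw [my_zpow_mul hS]; congr 1; ring
        have h3 : (1:ℝ) ≤ S^(k+1) := my_one_le_zpow hS (by omega)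
        have hexp : S^(k+1) * (S^(r+1) - 1) = S^(r+(k+2)) - S^(k+1) := by
          rw [mul_sub, hmul, mul_one]
        rw [hexp]
        linarith
      have h4 : (S^(k+1)*N)*(S^(r+1)-1) ≤ N' * (S^(r+1)-1) := by
        rw [htel]
        calc (S^(k+1)*N)*(S^(r+1)-1) = N * (S^(k+1)*(S^(r+1)-1)) := by ring
          _ ≤ N * (S^(r+(k+2))-1) := mul_le_mul_of_nonneg_left h2 hNnonneg
      exact le_of_mul_le_mul_right h4 h1
    rw [e1, e1', div_eq_mul_inv, div_eq_mul_inv, ← mul_assoc]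
    exact mul_le_mul_of_nonneg_right hnum (inv_nonneg.mpr hDpos.le)
  -- the P3 comparison
  have hP3bound : ((S-1) * S^(m-2*r-3)) * P3 ≤ P3' := by
    set D3 : ℝ := ∏ v ∈ Finset.Icc (1:ℤ) r, (S^v - 1) with hD3def
    set N3 : ℝ := ∏ v ∈ Finset.Icc (1:ℤ) r, (S^(m+v) - 1) with hN3def
    set N3' : ℝ := ∏ v ∈ Finset.Icc (1:ℤ) (r+1), (S^(m-2+v) - 1) with hN3'def
    set D3' : ℝ := ∏ v ∈ Finset.Icc (1:ℤ) (r+1), (S^v - 1) with hD3'def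
    clear_value D3 N3 N3' D3'
    have hD3pos : 0 < D3 := hD3def ▸ Finset.prod_pos (by
      intro v hv; simp only [Finset.mem_Icc] at hv
      exact zpow_sub_one_pos hS (by omega))
    have h1 : (0:ℝ) < S^(r+1) - 1 := zpow_sub_one_pos hS (by omega)
    have hD3'eq : D3' = D3 * (S^(r+1)-1) := by
      have h := my_prod_insert_right (fun v => S^v-1) (by omega : (1:ℤ) ≤ r+1)
      rw [show r+1-1 = r by ring] at h
      simpa [hD3'def, hD3def] using h
    have hN3nonneg : 0 ≤ N3 := hN3def ▸ Finset.prod_nonneg (by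
      intro v hv; simp only [Finset.mem_Icc] at hv
      exact zpow_sub_one_nonneg hS (by omega))
    have e3 : P3 = N3 / D3 := by rw [hP3def, hN3def, hD3def, ← Finset.prod_div_distrib]
    have e3' : P3' = N3' / D3' := by rw [hP3'def, hN3'def, hD3'def, ← Finset.prod_div_distrib]
    have hmr2 : (0:ℝ) < S^(m+r) - 1 := zpow_sub_one_pos hS (by omega)
    -- telescoping identity
    have htel3 : N3' * (S^(m+r)-1) = (S^(m-1)-1) * ((S^m-1) * N3) := by
      have hful1 : ∏ v ∈ Finset.Icc (1:ℤ) (r+2), (S^(m-2+v)-1)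
          = N3' * (S^(m+r)-1) := by
        have h := my_prod_insert_right (fun v => S^(m-2+v)-1) (by omega : (1:ℤ) ≤ r+2)
        rw [show r+2-1 = r+1 by ring, show m-2+(r+2) = m+r by ring] at h
        simpa [hN3'def] using h
      have hful2 : ∏ v ∈ Finset.Icc (1:ℤ) (r+2), (S^(m-2+v)-1)
          = (S^(m-1)-1) * ((S^m-1) * N3) := by
        have ha : ∏ v ∈ Finset.Icc (1:ℤ) (r+2), (S^(m-2+v)-1)
            = (S^(m-2+1)-1) * ∏ v ∈ Finset.Icc (2:ℤ) (r+2), (S^(m-2+v)-1) := by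
          have := my_prod_insert_left (fun v => S^(m-2+v)-1) (by omega : (1:ℤ) ≤ r+2)
          simpa using this
        have hb : ∏ v ∈ Finset.Icc (2:ℤ) (r+2), (S^(m-2+v)-1)
            = (S^(m-2+2)-1) * ∏ v ∈ Finset.Icc (3:ℤ) (r+2), (S^(m-2+v)-1) := by
          have := my_prod_insert_left (fun v => S^(m-2+v)-1) (by omega : (2:ℤ) ≤ r+2)
          simpa using this
        have hc : ∏ v ∈ Finset.Icc (3:ℤ) (r+2), (S^(m-2+v)-1)
            = ∏ v ∈ Finset.Icc (1:ℤ) r, (S^(m-2+(v+2))-1) :=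
          my_prod_shift' (fun v => S^(m-2+v)-1) 2 (by ring) (by ring)
        have hd : ∏ v ∈ Finset.Icc (1:ℤ) r, (S^(m-2+(v+2))-1) = N3 := by
          rw [hN3def]
          exact Finset.prod_congr rfl (fun v _ => by rw [show m-2+(v+2) = m+v by ring])
        rw [ha, hb, hc, hd, show m-2+1 = m-1 by ring, show m-2+2 = m by ring]
      rw [← hful1, hful2]
    -- the scalar inequality
    have hscalar : ((S-1) * S^(m-2*r-3)) * ((S^(r+1)-1)*(S^(m+r)-1))
        ≤ (S^(m-1)-1)*(S^m-1) := by
      have t1 : S^(m-r-1) * (S^(r+1)-1) ≤ S^m - 1 := by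
        have hmul : S^(m-r-1) * S^(r+1) = S^m := by
          rw [my_zpow_mul hS]; congr 1; ring
        have h3 : (1:ℝ) ≤ S^(m-r-1) := my_one_le_zpow hS (by omega)
        have hexp : S^(m-r-1) * (S^(r+1)-1) = S^m - S^(m-r-1) := by
          rw [mul_sub, hmul, mul_one]
        rw [hexp]
        linarith
      have t2 : ((S-1) * S^(-r-2)) * (S^(m+r)-1) ≤ S^(m-1) - 1 := by
        have hmul : S^(-r-2) * S^(m+r) = S^(m-2) := by
          rw [my_zpow_mul hS]; congr 1; ring
        have hmul2 : S^(m-1) = S^(m-2) * S := by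
          rw [show m-1 = m-2+1 by ring, zpow_add_one₀ hSne]
        have h3 : (1:ℝ) ≤ S^(m-2) := my_one_le_zpow hS (by omega)
        have h4 : (0:ℝ) < S^(-r-2) := my_zpow_pos hS _
        have h6 : (0:ℝ) ≤ (S-1) * S^(-r-2) := mul_nonneg (by linarith) h4.le
        have h5 : ((S-1) * S^(-r-2)) * (S^(m+r)-1) ≤ ((S-1) * S^(-r-2)) * S^(m+r) :=
          mul_le_mul_of_nonneg_left (by linarith) h6
        have h7 : ((S-1) * S^(-r-2)) * S^(m+r) = (S-1) * S^(m-2) := by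
          rw [mul_assoc, hmul]
        have h8 : (S-1) * S^(m-2) = S^(m-1) - S^(m-2) := by
          rw [hmul2]; ring
        calc ((S-1) * S^(-r-2)) * (S^(m+r)-1) ≤ ((S-1) * S^(-r-2)) * S^(m+r) := h5
          _ = S^(m-1) - S^(m-2) := by rw [h7, h8]
          _ ≤ S^(m-1) - 1 := by linarith
      have hsplit : S^(m-2*r-3) = S^(-r-2) * S^(m-r-1) := by
        rw [my_zpow_mul hS]; congr 1; ring
      have hnn1 : (0:ℝ) ≤ S^(m-r-1) * (S^(r+1)-1) :=
        mul_nonneg (my_zpow_pos hS _).le h1.le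
      have hnn2 : (0:ℝ) ≤ S^(m-1) - 1 := zpow_sub_one_nonneg hS (by omega)
      calc ((S-1) * S^(m-2*r-3)) * ((S^(r+1)-1)*(S^(m+r)-1))
          = (((S-1) * S^(-r-2)) * (S^(m+r)-1)) * (S^(m-r-1) * (S^(r+1)-1)) := by
            rw [hsplit]; ring
        _ ≤ (S^(m-1) - 1) * (S^m - 1) := mul_le_mul t2 t1 hnn1 hnn2
    -- numerator-level inequality
    have hnum3 : ((S-1)*S^(m-2*r-3)) * ((S^(r+1)-1) * N3) ≤ N3' := by
      have h4 : (((S-1)*S^(m-2*r-3)) * ((S^(r+1)-1) * N3)) * (S^(m+r)-1)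
          ≤ N3' * (S^(m+r)-1) := by
        rw [htel3]
        calc (((S-1)*S^(m-2*r-3)) * ((S^(r+1)-1) * N3)) * (S^(m+r)-1)
            = (((S-1) * S^(m-2*r-3)) * ((S^(r+1)-1)*(S^(m+r)-1))) * N3 := by ring
          _ ≤ ((S^(m-1)-1)*(S^m-1)) * N3 := mul_le_mul_of_nonneg_right hscalar hN3nonneg
          _ = (S^(m-1)-1) * ((S^m-1) * N3) := by ring
      exact le_of_mul_le_mul_right h4 hmr2
    rw [e3, e3', hD3'eq]
    rw [div_eq_mul_inv, div_eq_mul_inv, mul_inv]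
    calc ((S-1) * S^(m-2*r-3)) * (N3 * D3⁻¹)
        = (((S-1)*S^(m-2*r-3)) * ((S^(r+1)-1) * N3)) * (D3⁻¹ * (S^(r+1)-1)⁻¹) := by
          field_simp
      _ ≤ N3' * (D3⁻¹ * (S^(r+1)-1)⁻¹) := by
          apply mul_le_mul_of_nonneg_right hnum3
          positivity
  -- combine
  have hpow : S^((r+1)^2) = S^(r^2) * S^(2*r+1) := by
    rw [my_zpow_mul hS]; congr 1; ring
  have hcoef3nonneg : (0:ℝ) ≤ ((S-1) * S^(m-2*r-3)) * P3 := by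
    have := my_zpow_pos hS (m-2*r-3)
    have h9 : (0:ℝ) ≤ S - 1 := by linarith
    positivity
  have hmain : (S^(k+1) * P2) * (((S-1) * S^(m-2*r-3)) * P3) ≤ P2' * P3' := by
    apply mul_le_mul hP2bound hP3bound hcoef3nonneg hP2'nonneg
  calc (S^(2*r+1) * (S^(k+1) * ((S-1) * S^(m-2*r-3)))) * (S^(r^2) * P2 * P3)
      = (S^(r^2) * S^(2*r+1)) * ((S^(k+1) * P2) * (((S-1) * S^(m-2*r-3)) * P3)) := by
        ring
    _ ≤ (S^(r^2) * S^(2*r+1)) * (P2' * P3') := by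
        apply mul_le_mul_of_nonneg_left hmain
        have := my_zpow_pos hS (r^2)
        have := my_zpow_pos hS (2*r+1)
        positivity
    _ = S^((r+1)^2) * P2' * P3' := by rw [hpow]; ring

/-! ### The termwise inequality -/

lemma term_lt {n s e : ℕ} (hs : 2 ≤ s) (he : e ≤ 4) {i k : ℤ} (hi : 0 ≤ i)
    (hk : -1 ≤ k) (hk' : k ≤ i - 1) (h6 : 6*i + 11 ≤ 2*(n:ℤ) + (e:ℤ)) :
    F n s e i k * G n s i k < F n s e (i+1) k * G n s (i+1) k := by
  have hS : (2:ℝ) ≤ (s:ℝ) := by exact_mod_cast hs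
  have hSne := mySne hS
  have heZ : (e:ℤ) ≤ 4 := by exact_mod_cast he
  have ht1 : 1 ≤ tval s e := tval_one_le hs
  have ht0 : 0 < tval s e := tval_pos hs
  set S : ℝ := (s:ℝ) with hSdef
  set t : ℝ := tval s e with htdef
  obtain ⟨m, hm⟩ : ∃ m : ℤ, m = (n:ℤ) - 2*i + k - 1 := ⟨_, rfl⟩
  obtain ⟨r, hrr⟩ : ∃ r : ℤ, r = i - k := ⟨_, rfl⟩
  have hr1 : 1 ≤ r := by omega
  have hm2 : 2 ≤ m := by omega
  have hmr : r + 1 ≤ m := by omega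
  -- rewrite F and G in normalized form
  have hFi : F n s e i k = ∏ u ∈ Finset.Icc m (m+r-1), (S^u * t + 1) := by
    unfold F
    rw [show (n:ℤ) - 2*i + k - 1 = m by omega, show (n:ℤ) - i - 2 = m+r-1 by omega]
  have hFi1 : F n s e (i+1) k = ∏ u ∈ Finset.Icc (m-2) (m+r-2), (S^u * t + 1) := by
    unfold F
    rw [show (n:ℤ) - 2*(i+1) + k - 1 = m-2 by omega,
        show (n:ℤ) - (i+1) - 2 = m+r-2 by omega]
  have hGi : G n s i k = S^(r^2) *
      (∏ v ∈ Finset.Icc (1:ℤ) (k+1), (S^(r+v)-1)/(S^v-1)) *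
      (∏ v ∈ Finset.Icc (1:ℤ) r, (S^(m+v)-1)/(S^v-1)) := by
    unfold G
    rw [show i - k = r by omega, show (n:ℤ) - 2*i + k - 1 = m by omega]
  have hGi1 : G n s (i+1) k = S^((r+1)^2) *
      (∏ v ∈ Finset.Icc (1:ℤ) (k+1), (S^(r+1+v)-1)/(S^v-1)) *
      (∏ v ∈ Finset.Icc (1:ℤ) (r+1), (S^(m-2+v)-1)/(S^v-1)) := by
    unfold G
    rw [show i + 1 - k = r+1 by omega, show (n:ℤ) - 2*(i+1) + k - 1 = m-2 by omega]
  -- the two step inequalities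
  have hFstep : (S^(m-2) * t * S^(-r)) * F n s e i k < F n s e (i+1) k := by
    rw [hFi, hFi1]; exact F_step hS ht1 hm2 hr1
  have hGstep : (S^(2*r+1) * (S^(k+1) * ((S-1) * S^(m-2*r-3)))) * G n s i k
      ≤ G n s (i+1) k := by
    rw [hGi, hGi1]; exact G_step hS hm2 hr1 hk hmr
  -- positivity
  have hFipos : 0 < F n s e i k := F_pos hs i k
  have hFi1pos : 0 < F n s e (i+1) k := F_pos hs (i+1) k
  have hGipos : 0 < G n s i k := G_pos hs hk' (by omega)
  have hcoefGpos : 0 < S^(2*r+1) * (S^(k+1) * ((S-1) * S^(m-2*r-3))) := by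
    have h1 := my_zpow_pos hS (2*r+1)
    have h2 := my_zpow_pos hS (k+1)
    have h3 := my_zpow_pos hS (m-2*r-3)
    have h4 : (0:ℝ) < S - 1 := by
      have := myS1 hS; simp only [← hSdef] at *; linarith
    positivity
  have hcoefFpos : 0 < S^(m-2) * t * S^(-r) := by
    have h1 := my_zpow_pos hS (m-2)
    have h2 := my_zpow_pos hS (-r)
    positivity
  -- combined coefficient is at least 1
  have hC : 1 ≤ (S^(m-2) * t * S^(-r)) * (S^(2*r+1) * (S^(k+1) * ((S-1) * S^(m-2*r-3)))) := by
    have hzp : S^(m-2) * S^(-r) * S^(2*r+1) * S^(k+1) * S^(m-2*r-3)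
        = S^(2*m-r+k-3) := by
      rw [my_zpow_mul hS, my_zpow_mul hS, my_zpow_mul hS, my_zpow_mul hS]
      congr 1; ring
    have hE : 1 ≤ t * S^(2*m-r+k-3) := by
      rw [htdef, hSdef]
      exact tval_mul_zpow_ge_one hs (by omega)
    have hS1' : (1:ℝ) ≤ S - 1 := by
      have := hS; simp only [← hSdef] at *; linarith
    have heq : (S^(m-2) * t * S^(-r)) * (S^(2*r+1) * (S^(k+1) * ((S-1) * S^(m-2*r-3))))
        = (S-1) * (t * (S^(m-2) * S^(-r) * S^(2*r+1) * S^(k+1) * S^(m-2*r-3))) := by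
      ring
    rw [heq, hzp]
    nlinarith
  -- final combination
  have step1 : ((S^(m-2) * t * S^(-r)) * F n s e i k)
      * ((S^(2*r+1) * (S^(k+1) * ((S-1) * S^(m-2*r-3)))) * G n s i k)
      < F n s e (i+1) k * G n s (i+1) k := by
    apply mul_lt_mul hFstep hGstep (mul_pos hcoefGpos hGipos) hFi1pos.le
  have step2 : F n s e i k * G n s i k
      ≤ ((S^(m-2) * t * S^(-r)) * F n s e i k)
      * ((S^(2*r+1) * (S^(k+1) * ((S-1) * S^(m-2*r-3)))) * G n s i k) := by
    have hprodpos : 0 ≤ F n s e i k * G n s i k := (mul_pos hFipos hGipos).le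
    calc F n s e i k * G n s i k
        = 1 * (F n s e i k * G n s i k) := by ring
      _ ≤ ((S^(m-2) * t * S^(-r)) * (S^(2*r+1) * (S^(k+1) * ((S-1) * S^(m-2*r-3)))))
            * (F n s e i k * G n s i k) := mul_le_mul_of_nonneg_right hC hprodpos
      _ = ((S^(m-2) * t * S^(-r)) * F n s e i k)
            * ((S^(2*r+1) * (S^(k+1) * ((S-1) * S^(m-2*r-3)))) * G n s i k) := by ring
  exact lt_of_le_of_lt step2 step1

/-! ### The single-step inequality for `κ` -/

lemma kappa_step {n s e : ℕ} (hs : 2 ≤ s) (he : e ≤ 4) {i : ℤ} (hi : 0 ≤ i)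
    (h6 : 6*i + 11 ≤ 2*(n:ℤ) + (e:ℤ)) :
    kappa n s e i < kappa n s e (i+1) := by
  have heZ : (e:ℤ) ≤ 4 := by exact_mod_cast he
  have hmax1 : max (2*i - (n:ℤ) + 1) (-1) = -1 := max_eq_right (by omega)
  have hmax2 : max (2*(i+1) - (n:ℤ) + 1) (-1) = -1 := max_eq_right (by omega)
  unfold kappa
  rw [hmax1, hmax2]
  have hsplit : ∑ k ∈ Finset.Icc (-1 : ℤ) (i+1-1), F n s e (i+1) k * G n s (i+1) k
      = (∑ k ∈ Finset.Icc (-1 : ℤ) (i-1), F n s e (i+1) k * G n s (i+1) k)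
        + F n s e (i+1) i * G n s (i+1) i := by
    rw [show i+1-1 = i by ring]
    have hIcc : Finset.Icc (-1:ℤ) i = insert i (Finset.Icc (-1:ℤ) (i-1)) := by
      ext x; simp only [Finset.mem_Icc, Finset.mem_insert]; omega
    rw [hIcc, Finset.sum_insert (by simp only [Finset.mem_Icc]; omega)]
    ring
  rw [hsplit]
  have hlastpos : 0 < F n s e (i+1) i * G n s (i+1) i := by
    apply mul_pos (F_pos hs _ _)
    exact G_pos hs (by omega) (by omega)
  have hsum : ∑ k ∈ Finset.Icc (-1 : ℤ) (i-1), F n s e i k * G n s i k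
      < ∑ k ∈ Finset.Icc (-1 : ℤ) (i-1), F n s e (i+1) k * G n s (i+1) k := by
    apply Finset.sum_lt_sum_of_nonempty
    · exact ⟨-1, by simp only [Finset.mem_Icc]; omega⟩
    · intro k hkmem
      simp only [Finset.mem_Icc] at hkmem
      exact term_lt hs he hi hkmem.1 hkmem.2 h6
  linarith

/-! ### The theorem -/

theorem stmt_14 (n s e : ℕ) (hs : 2 ≤ s) (he : e ≤ 4)
    (hn : 5 - (e:ℝ)/2 ≤ (n:ℝ))
    (i j : ℤ) (hi : 0 ≤ i) (hij : i < j)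
    (hj : j ≤ ⌈((n:ℝ) - 5 + (e:ℝ)/2) / 3⌉) :
    kappa n s e i < kappa n s e j := by
  -- the key bound for each intermediate index
  have key : ∀ i' : ℤ, 0 ≤ i' → i' + 1 ≤ j → kappa n s e i' < kappa n s e (i'+1) := by
    intro i' hi' hij'
    apply kappa_step hs he hi'
    have h1 : i' < ⌈((n:ℝ) - 5 + (e:ℝ)/2) / 3⌉ := by omega
    have h2 : (i' : ℝ) < ((n:ℝ) - 5 + (e:ℝ)/2) / 3 := by
      exact_mod_cast Int.lt_ceil.mp h1
    have h3 : (6*i' : ℝ) < 2*(n:ℝ) - 10 + (e:ℝ) := by linarith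
    have h4 : (6*i' : ℤ) < 2*(n:ℤ) - 10 + (e:ℤ) := by exact_mod_cast h3
    omega
  have main : ∀ j' : ℤ, i + 1 ≤ j' → (j' ≤ j → kappa n s e i < kappa n s e j') := by
    intro j' hj'
    refine Int.le_induction (motive := fun j' _ => j' ≤ j → kappa n s e i < kappa n s e j')
      (fun hle => key i hi hle) (fun j'' hj'' ih hle => ?_) j' hj'
    exact lt_trans (ih (by omega)) (key j'' (by omega) hle)
  exact main j (by omega) le_rfl
end
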